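/- Let H be a complex Hilbert space and ε a selfadjoint unitary bounded operator on H. Then for every bounded operator x on H, the supremum over pairs (ξ, η) ∈ H × H with ‖ξ‖² + ‖η‖² ≤ 1 of |⟨x η, ε ξ⟩| equals ‖x‖ / 2. (This is the claim that for a concretely represented operator space the matrix norm recovered from the strong matrix norm via ‖x‖ = 2·‖[[0,x],[0,0]]‖^s coincides with the operator norm.) -/

import Mathlib

open scoped ComplexConjugate

theorem strong_norm_of_corner_block
    {H : Type*} [NormedAddCommGroup H] [InnerProductSpace ℂ H] [CompleteSpace H]
    (ε : H →L[ℂ] H) (hε_sa : IsSelfAdjoint ε) (hε_sq : ε * ε = 1)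
    (x : H →L[ℂ] H) :
    sSup {r : ℝ | ∃ ξ η : H, ‖ξ‖ ^ 2 + ‖η‖ ^ 2 ≤ 1 ∧
        r = ‖(inner ℂ (x η) (ε ξ) : ℂ)‖} = ‖x‖ / 2 := by
  set S : Set ℝ := {r : ℝ | ∃ ξ η : H, ‖ξ‖ ^ 2 + ‖η‖ ^ 2 ≤ 1 ∧
        r = ‖(inner ℂ (x η) (ε ξ) : ℂ)‖} with hS
  have hεε : ∀ v : H, ε (ε v) = v := fun v => by
    have := congrArg (fun f : H →L[ℂ] H => f v) hε_sq
    simpa using this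
  have hadj : ContinuousLinearMap.adjoint ε = ε := hε_sa.adjoint_eq
  have hsym : (ε : H →ₗ[ℂ] H).IsSymmetric :=
    (ContinuousLinearMap.isSelfAdjoint_iff_isSymmetric.mp hε_sa)
  have hεnorm : ∀ v : H, ‖ε v‖ = ‖v‖ := by
    intro v
    have h : (inner ℂ (ε v) (ε v) : ℂ) = inner ℂ v v := by
      have := hsym (ε v) v
      simp only [ContinuousLinearMap.coe_coe] at this
      rw [← this, hεε]
    have h2 : ‖ε v‖ ^ 2 = ‖v‖ ^ 2 := by
      rw [← inner_self_eq_norm_sq (𝕜 := ℂ), ← inner_self_eq_norm_sq (𝕜 := ℂ), h]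
    have := congrArg Real.sqrt h2
    simpa [Real.sqrt_sq (norm_nonneg _)] using this
  have h0S : (0 : ℝ) ∈ S := ⟨0, 0, by norm_num, by simp⟩
  have hub : ∀ r ∈ S, r ≤ ‖x‖ / 2 := by
    rintro r ⟨ξ, η, hle, rfl⟩
    have h1 : ‖(inner ℂ (x η) (ε ξ) : ℂ)‖ ≤ ‖x η‖ * ‖ε ξ‖ := by
      simpa using norm_inner_le_norm (𝕜 := ℂ) (x η) (ε ξ)
    have h2 : ‖x η‖ ≤ ‖x‖ * ‖η‖ := x.le_opNorm η
    have h3 : ‖ε ξ‖ = ‖ξ‖ := hεnorm ξ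
    have hξ : (0:ℝ) ≤ ‖ξ‖ := norm_nonneg _
    have hη : (0:ℝ) ≤ ‖η‖ := norm_nonneg _
    have hx : (0:ℝ) ≤ ‖x‖ := norm_nonneg _
    have h4 : ‖x η‖ * ‖ε ξ‖ ≤ ‖x‖ * ‖η‖ * ‖ξ‖ := by
      rw [h3]
      calc ‖x η‖ * ‖ξ‖ ≤ (‖x‖ * ‖η‖) * ‖ξ‖ := mul_le_mul_of_nonneg_right h2 hξ
        _ = ‖x‖ * ‖η‖ * ‖ξ‖ := by ring
    have h5 : ‖η‖ * ‖ξ‖ ≤ 1 / 2 := by nlinarith [sq_nonneg (‖ξ‖ - ‖η‖)]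
    nlinarith [mul_le_mul_of_nonneg_left h5 hx]
  have hbdd : BddAbove S := ⟨‖x‖ / 2, hub⟩
  have hSup_nonneg : 0 ≤ sSup S := le_csSup hbdd h0S
  refine le_antisymm (Real.sSup_le hub (by positivity)) ?_
  rw [div_le_iff₀ (by norm_num : (0:ℝ) < 2)]
  refine x.opNorm_le_bound (by positivity) ?_
  intro η
  rcases eq_or_ne (x η) 0 with hxη | hxη
  · rw [hxη]; simp; positivity
  have hη : η ≠ 0 := by
    intro h; apply hxη; rw [h]; simp
  have hηn : (0:ℝ) < ‖η‖ := norm_pos_iff.mpr hη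
  have hxηn : (0:ℝ) < ‖x η‖ := norm_pos_iff.mpr hxη
  set c : ℂ := (((Real.sqrt 2)⁻¹ * ‖η‖⁻¹ : ℝ) : ℂ) with hc
  set d : ℂ := (((Real.sqrt 2)⁻¹ * ‖x η‖⁻¹ : ℝ) : ℂ) with hd
  have hs2 : (0:ℝ) < Real.sqrt 2 := by positivity
  set ξ' : H := d • ε (x η) with hξ'
  set η' : H := c • η with hη'
  have hnξ' : ‖ξ'‖ = (Real.sqrt 2)⁻¹ := by
    rw [hξ', norm_smul, hεnorm, hd]
    simp only [Complex.norm_real, Real.norm_eq_abs]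
    rw [abs_of_nonneg (by positivity), mul_assoc, inv_mul_cancel₀ (ne_of_gt hxηn), mul_one]
  have hnη' : ‖η'‖ = (Real.sqrt 2)⁻¹ := by
    rw [hη', norm_smul, hc]
    simp only [Complex.norm_real, Real.norm_eq_abs]
    rw [abs_of_nonneg (by positivity), mul_assoc, inv_mul_cancel₀ (ne_of_gt hηn), mul_one]
  have hmem : ‖x η‖ / (2 * ‖η‖) ∈ S := by
    refine ⟨ξ', η', ?_, ?_⟩
    · rw [hnξ', hnη']
      rw [show ((Real.sqrt 2)⁻¹ : ℝ) ^ 2 = (Real.sqrt 2 ^ 2)⁻¹ by ring]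
      rw [Real.sq_sqrt (by norm_num : (0:ℝ) ≤ 2)]
      norm_num
    · have hxc : x η' = c • x η := by rw [hη', map_smul]
      have hec : ε ξ' = d • x η := by rw [hξ', map_smul, hεε]
      rw [hxc, hec, inner_smul_left, inner_smul_right]
      rw [inner_self_eq_norm_sq_to_K (𝕜 := ℂ)]
      simp only [norm_mul, Complex.norm_conj]
      rw [hc, hd]
      simp only [Complex.norm_real, Real.norm_eq_abs]
      rw [abs_of_nonneg (by positivity), abs_of_nonneg (by positivity)]
      simp only [norm_pow, Complex.norm_real, RCLike.norm_ofReal, Real.norm_eq_abs, abs_norm]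
      have hss : Real.sqrt 2 * Real.sqrt 2 = 2 :=
        Real.mul_self_sqrt (by norm_num : (0:ℝ) ≤ 2)
      field_simp
      ring_nf
      rw [Real.sq_sqrt (by norm_num : (0:ℝ) ≤ 2)]
  have hle : ‖x η‖ / (2 * ‖η‖) ≤ sSup S := le_csSup hbdd hmem
  have key : ‖x η‖ ≤ sSup S * (2 * ‖η‖) := by
    have h := mul_le_mul_of_nonneg_right hle (show (0:ℝ) ≤ 2 * ‖η‖ by positivity)
    rwa [div_mul_cancel₀ _ (by positivity : (2:ℝ) * ‖η‖ ≠ 0)] at h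
  linarith [key]
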